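/- arXiv:2601.23054 — 4 statements merged into one kernel-verified Lean document; each statement's English description precedes it below -/
import Mathlib

section
/- The map ℓ : H → ℝ/ℤ sending f to n_1(f)·α_1 + … + n_s(f)·α_s (mod 1), where (n_i(f)) is the unique integer tuple with f(x) − x − Σ n_i(f)α_i ∈ { p/q mod 1 : p ∈ ℤ } for all x, is a group homomorphism; ℓ(R_a) = a for every a ∈ A; the image of ℓ is exactly A; and every f ∈ H can be written as f = P ∘ R_{ℓ(f)} and also as f = R_{ℓ(f)} ∘ P' with P, P' ∈ ker ℓ. -/
open Equiv

noncomputable section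

/-- The circle `ℝ/ℤ`. -/
abbrev Circ : Type := AddCircle (1 : ℝ)

/-- Rotation by `a` : the bijection `x ↦ x + a` of the circle. -/
def Rot (a : Circ) : Equiv.Perm Circ := Equiv.addRight a

/-- The subgroup `{ p/q mod 1 : p ∈ ℤ }` of the circle. -/
def RatPts (q : ℕ) : AddSubgroup Circ :=
  AddSubgroup.zmultiples (((q : ℝ)⁻¹ : ℝ) : Circ)

/-- The group of bijections of the circle all of whose displacements lie in `RatPts q`. -/
def Delta (q : ℕ) : Subgroup (Equiv.Perm Circ) where
  carrier := {f | ∀ x : Circ, f x - x ∈ RatPts q}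
  one_mem' := by intro x; simpa using zero_mem (RatPts q)
  mul_mem' := by
    intro f g hf hg x
    have h1 : f (g x) - g x ∈ RatPts q := hf (g x)
    have h2 : g x - x ∈ RatPts q := hg x
    have h3 := add_mem h1 h2
    simpa [Equiv.Perm.mul_apply, sub_add_sub_cancel] using h3
  inv_mem' := by
    intro f hf x
    have h1 : f (f⁻¹ x) - f⁻¹ x ∈ RatPts q := hf (f⁻¹ x)
    rw [show f (f⁻¹ x) = x from f.apply_symm_apply x] at h1
    simpa using neg_mem h1

/-- The subgroup `A` of the circle generated by the classes of `α₁, …, α_s`. -/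
def Agrp (s : ℕ) (α : Fin s → ℝ) : AddSubgroup Circ :=
  AddSubgroup.closure (Set.range fun i => ((α i : ℝ) : Circ))

/-- The group `H` generated by the rotations `R_{αᵢ}` and the maps `E_{τⱼ}`. -/
def Hgrp (s m q : ℕ) (α : Fin s → ℝ) (τs : Fin m → Equiv.Perm (Fin q))
    (E : Equiv.Perm (Fin q) → Equiv.Perm Circ) : Subgroup (Equiv.Perm Circ) :=
  Subgroup.closure ((Set.range fun i => Rot ((α i : ℝ) : Circ)) ∪ (Set.range fun j => E (τs j)))

/-- The group `Q` generated by the maps `E_{τⱼ}`. -/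
def Qgrp (m q : ℕ) (τs : Fin m → Equiv.Perm (Fin q))
    (E : Equiv.Perm (Fin q) → Equiv.Perm Circ) : Subgroup (Equiv.Perm Circ) :=
  Subgroup.closure (Set.range fun j => E (τs j))

/-- The subgroup `𝔖(Q)` of `S_q` generated by `τ₁, …, τ_m`. -/
def SQgrp (m q : ℕ) (τs : Fin m → Equiv.Perm (Fin q)) : Subgroup (Equiv.Perm (Fin q)) :=
  Subgroup.closure (Set.range τs)

/-- The subgroup `W = ⟨σ, τ₁, …, τ_m⟩` of `S_q`, where `σ` is the `q`-cycle. -/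
def Wgrp (m q : ℕ) (τs : Fin m → Equiv.Perm (Fin q)) : Subgroup (Equiv.Perm (Fin q)) :=
  Subgroup.closure ({finRotate q} ∪ Set.range τs)

lemma key {s q : ℕ} (hq : 2 ≤ q) {α : Fin s → ℝ}
    (hα : LinearIndependent ℚ (Fin.cons (1 : ℝ) α))
    (n : Fin s → ℤ) (h : (∑ i, n i • ((α i : ℝ) : Circ)) ∈ RatPts q) :
    ∑ i, n i • ((α i : ℝ) : Circ) = 0 := by
  have hsum : (∑ i, n i • ((α i : ℝ) : Circ)) = (((∑ i, n i • α i : ℝ)) : Circ) := by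
    induction (Finset.univ : Finset (Fin s)) using Finset.induction with
    | empty => simp
    | insert _ _ hx ih =>
        rw [Finset.sum_insert hx, Finset.sum_insert hx, ih, ← AddCircle.coe_zsmul,
          ← AddCircle.coe_add]
  obtain ⟨p, hp⟩ := AddSubgroup.mem_zmultiples_iff.mp h
  rw [hsum] at hp
  have hp' : (((p • (q:ℝ)⁻¹ - ∑ i, n i • α i : ℝ)) : Circ) = 0 := by
    rw [AddCircle.coe_sub, sub_eq_zero, ← hp]
    rfl
  obtain ⟨k, hk⟩ := (AddCircle.coe_eq_zero_iff 1).mp hp'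
  have hq0 : (q : ℝ) ≠ 0 := by positivity
  have hli := Fintype.linearIndependent_iff.mp hα
    (Fin.cons ((p : ℚ) / q - k) (fun i => -(n i : ℚ)))
  have hrel : ∑ j, (Fin.cons ((p : ℚ) / q - k) (fun i => -(n i : ℚ)) : Fin (s+1) → ℚ) j
      • (Fin.cons (1 : ℝ) α : Fin (s+1) → ℝ) j = 0 := by
    rw [Fin.sum_univ_succ]
    simp only [Fin.cons_succ, Fin.cons_zero, Rat.smul_def]
    push_cast
    simp only [zsmul_eq_mul, smul_eq_mul, mul_one] at hk ⊢
    have h2 : ∑ i, -(n i : ℝ) * α i = -∑ i, (n i : ℝ) * α i := by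
      rw [← Finset.sum_neg_distrib]; congr 1; ext i; ring
    rw [h2, div_eq_mul_inv]
    linarith [hk]
  have hz := hli hrel
  have hn : ∀ i, n i = 0 := by
    intro i
    have := hz i.succ
    simp only [Fin.cons_succ, neg_eq_zero] at this
    exact_mod_cast this
  simp [hn]

lemma uniq {s q : ℕ} (hq : 2 ≤ q) {α : Fin s → ℝ}
    (hα : LinearIndependent ℚ (Fin.cons (1 : ℝ) α))
    {u v : Circ} (n n' : Fin s → ℤ)
    (hu : u = ∑ i, n i • ((α i : ℝ) : Circ)) (hv : v = ∑ i, n' i • ((α i : ℝ) : Circ))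
    (h : u - v ∈ RatPts q) : u = v := by
  have hd : u - v = ∑ i, (n i - n' i) • ((α i : ℝ) : Circ) := by
    rw [hu, hv, ← Finset.sum_sub_distrib]
    congr 1; ext i; rw [sub_smul]
  rw [hd] at h
  have := key hq hα (fun i => n i - n' i) h
  rw [← sub_eq_zero, hd, this]

lemma rot_add (a b : Circ) : Rot (a + b) = Rot a * Rot b := by
  ext x
  simp only [Rot, Equiv.Perm.mul_apply, Equiv.coe_addRight]
  abel

lemma rot_zero : Rot (0 : Circ) = 1 := by ext x; simp [Rot]

lemma rot_neg (a : Circ) : Rot (-a) = (Rot a)⁻¹ := by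
  rw [eq_comm, inv_eq_iff_mul_eq_one, ← rot_add, add_neg_cancel, rot_zero]

lemma rot_mem {s m q : ℕ} {α : Fin s → ℝ} {τs : Fin m → Equiv.Perm (Fin q)}
    {E : Equiv.Perm (Fin q) → Equiv.Perm Circ} {a : Circ} (ha : a ∈ Agrp s α) :
    Rot a ∈ Hgrp s m q α τs E := by
  induction ha using AddSubgroup.closure_induction with
  | mem x hx =>
      obtain ⟨i, rfl⟩ := hx
      exact Subgroup.subset_closure (Or.inl ⟨i, rfl⟩)
  | zero => rw [rot_zero]; exact one_mem _
  | add x y _ _ hx hy => rw [rot_add]; exact mul_mem hx hy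
  | neg x _ hx => rw [rot_neg]; exact inv_mem hx

lemma mem_Agrp_iff {s : ℕ} {α : Fin s → ℝ} {a : Circ} (ha : a ∈ Agrp s α) :
    ∃ n : Fin s → ℤ, a = ∑ i, n i • ((α i : ℝ) : Circ) := by
  induction ha using AddSubgroup.closure_induction with
  | mem x hx =>
      obtain ⟨i, rfl⟩ := hx
      exact ⟨Pi.single i 1, by simp [Pi.single_apply, Finset.sum_ite_eq']⟩
  | zero => exact ⟨0, by simp⟩
  | add x y _ _ hx hy =>
      obtain ⟨n, rfl⟩ := hx; obtain ⟨n', rfl⟩ := hy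
      exact ⟨n + n', by rw [← Finset.sum_add_distrib]; congr 1; ext i; simp [add_smul]⟩
  | neg x _ hx =>
      obtain ⟨n, rfl⟩ := hx
      exact ⟨-n, by rw [← Finset.sum_neg_distrib]; congr 1; ext i; simp [neg_smul]⟩

theorem stmt_1
    (s m q : ℕ) (hs : 1 ≤ s) (hm : 1 ≤ m) (hq : 2 ≤ q)
    (α : Fin s → ℝ) (hα : LinearIndependent ℚ (Fin.cons (1 : ℝ) α))
    (τs : Fin m → Equiv.Perm (Fin q))
    (E : Equiv.Perm (Fin q) → Equiv.Perm Circ)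
    (hE : ∀ (τ : Equiv.Perm (Fin q)) (i : Fin q) (t : ℝ), 0 ≤ t → t < 1 / q →
      E τ ((((i : ℕ) : ℝ) / q + t : ℝ) : Circ) = ((((τ i : ℕ) : ℝ) / q + t : ℝ) : Circ))
    (ℓ : ↥(Hgrp s m q α τs E) → Circ)
    (hℓ : ∀ f : ↥(Hgrp s m q α τs E),
      (∃ n : Fin s → ℤ, ℓ f = ∑ i, n i • ((α i : ℝ) : Circ)) ∧
      ∀ x : Circ, (f : Equiv.Perm Circ) x - x - ℓ f ∈ RatPts q) :
    (∀ f g : ↥(Hgrp s m q α τs E), ℓ (f * g) = ℓ f + ℓ g) ∧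
    (∀ (a : Circ), a ∈ Agrp s α → ∀ (hmem : Rot a ∈ Hgrp s m q α τs E), ℓ ⟨Rot a, hmem⟩ = a) ∧
    Set.range ℓ = (Agrp s α : Set Circ) ∧
    (∀ f : ↥(Hgrp s m q α τs E), ∃ P P' : ↥(Hgrp s m q α τs E),
      ℓ P = 0 ∧ ℓ P' = 0 ∧
      (f : Equiv.Perm Circ) = (P : Equiv.Perm Circ) * Rot (ℓ f) ∧
      (f : Equiv.Perm Circ) = Rot (ℓ f) * (P' : Equiv.Perm Circ)) := by
  -- homomorphism
  have hom : ∀ f g : ↥(Hgrp s m q α τs E), ℓ (f * g) = ℓ f + ℓ g := by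
    intro f g
    obtain ⟨⟨nfg, hnfg⟩, hdfg⟩ := hℓ (f * g)
    obtain ⟨⟨nf, hnf⟩, hdf⟩ := hℓ f
    obtain ⟨⟨ng, hng⟩, hdg⟩ := hℓ g
    have d1 := hdfg 0
    have d2 := hdf ((g : Equiv.Perm Circ) 0)
    have d3 := hdg 0
    have hmulapp : ((f * g : ↥(Hgrp s m q α τs E)) : Equiv.Perm Circ) 0
        = (f : Equiv.Perm Circ) ((g : Equiv.Perm Circ) 0) := rfl
    rw [hmulapp] at d1
    have hmem : ℓ (f * g) - (ℓ f + ℓ g) ∈ RatPts q := by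
      have := sub_mem (add_mem d2 d3) d1
      have heq : ((f : Equiv.Perm Circ) ((g : Equiv.Perm Circ) 0) - (g : Equiv.Perm Circ) 0 - ℓ f
          + ((g : Equiv.Perm Circ) 0 - 0 - ℓ g))
          - ((f : Equiv.Perm Circ) ((g : Equiv.Perm Circ) 0) - 0 - ℓ (f * g))
          = ℓ (f * g) - (ℓ f + ℓ g) := by abel
      rwa [heq] at this
    exact uniq hq hα nfg (nf + ng) hnfg
      (by rw [hnf, hng, ← Finset.sum_add_distrib]; congr 1; ext i; rw [Pi.add_apply, add_smul])
      hmem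
  have ell_one : ℓ 1 = 0 := by
    have := hom 1 1
    rw [mul_one] at this
    exact left_eq_add.mp this
  have ell_inv : ∀ f : ↥(Hgrp s m q α τs E), ℓ f⁻¹ = -ℓ f := by
    intro f
    have h := hom f f⁻¹
    rw [mul_inv_cancel, ell_one] at h
    exact eq_neg_of_add_eq_zero_right h.symm
  -- part 2
  have part2 : ∀ (a : Circ), a ∈ Agrp s α → ∀ (hmem : Rot a ∈ Hgrp s m q α τs E),
      ℓ ⟨Rot a, hmem⟩ = a := by
    intro a ha hmem
    obtain ⟨⟨n, hn⟩, hd⟩ := hℓ ⟨Rot a, hmem⟩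
    obtain ⟨n', hn'⟩ := mem_Agrp_iff ha
    have d := hd 0
    have hap : ((⟨Rot a, hmem⟩ : ↥(Hgrp s m q α τs E)) : Equiv.Perm Circ) 0 = (0 : Circ) + a := rfl
    rw [hap, zero_add] at d
    have d' : a - ℓ ⟨Rot a, hmem⟩ ∈ RatPts q := by
      have : a - 0 - ℓ ⟨Rot a, hmem⟩ = a - ℓ ⟨Rot a, hmem⟩ := by abel
      rwa [this] at d
    exact (uniq hq hα n' n hn' hn d').symm
  -- ℓ f lands in Agrp
  have mem_A : ∀ f : ↥(Hgrp s m q α τs E), ℓ f ∈ Agrp s α := by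
    intro f
    obtain ⟨n, hn⟩ := (hℓ f).1
    rw [hn]
    exact sum_mem fun i _ => zsmul_mem (AddSubgroup.subset_closure (Set.mem_range_self i)) _
  refine ⟨hom, part2, ?_, ?_⟩
  · ext a
    constructor
    · rintro ⟨f, rfl⟩
      exact mem_A f
    · intro ha
      exact Set.mem_range.mpr ⟨⟨Rot a, rot_mem ha⟩, part2 a ha _⟩
  · intro f
    have hfA := mem_A f
    set r : ↥(Hgrp s m q α τs E) := ⟨Rot (ℓ f), rot_mem hfA⟩ with hrdef
    have hr : ℓ r = ℓ f := part2 _ hfA _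
    refine ⟨f * r⁻¹, r⁻¹ * f, ?_, ?_, ?_, ?_⟩
    · rw [hom, ell_inv, hr, add_neg_cancel]
    · rw [hom, ell_inv, hr, neg_add_cancel]
    · push_cast
      exact (inv_mul_cancel_right _ _).symm
    · push_cast
      exact (mul_inv_cancel_left _ _).symm
end
end

section
/- The group K is generated by the set { R_a ∘ g ∘ R_a⁻¹ : a ∈ A, g ∈ Q }, where R_a is the rotation by a. -/
open Equiv

noncomputable section

lemma rot_apply (a x : Circ) : Rot a x = x + a := rfl

lemma rot_inv (a : Circ) : (Rot a)⁻¹ = Rot (-a) := by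
  apply inv_eq_of_mul_eq_one_right
  rw [← rot_add, add_neg_cancel, rot_zero]

lemma circ_decomp (q : ℕ) (hq : 1 ≤ q) (x : Circ) :
    ∃ (i : Fin q) (t : ℝ), 0 ≤ t ∧ t < 1 / q ∧ x = ((((i : ℕ) : ℝ) / q + t : ℝ) : Circ) := by
  obtain ⟨r, rfl⟩ := QuotientAddGroup.mk_surjective x
  set r' := Int.fract r with hr'
  have hq0 : (0 : ℝ) < q := by positivity
  have h0 : 0 ≤ r' := Int.fract_nonneg r
  have h1 : r' < 1 := Int.fract_lt_one r
  have hfl0 : 0 ≤ ⌊r' * q⌋ := Int.floor_nonneg.2 (by positivity)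
  have hflq : ⌊r' * q⌋ < q := by
    have : r' * q < q := by nlinarith
    exact_mod_cast Int.floor_lt.2 (by exact_mod_cast this)
  have hle : (⌊r' * q⌋ : ℝ) ≤ r' * q := Int.floor_le _
  have hlt : r' * q < (⌊r' * q⌋ : ℝ) + 1 := Int.lt_floor_add_one _
  refine ⟨⟨⌊r' * q⌋.toNat, by omega⟩, r' - (⌊r' * q⌋ : ℝ) / q, ?_, ?_, ?_⟩
  · rw [sub_nonneg, div_le_iff₀ hq0]; exact hle
  · rw [sub_lt_iff_lt_add, ← add_div, lt_div_iff₀ hq0]; linarith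
  · have hcast : ((⌊r' * q⌋.toNat : ℕ) : ℝ) = (⌊r' * q⌋ : ℝ) := by
      exact_mod_cast congrArg Int.cast (Int.toNat_of_nonneg hfl0)
    show ((r : ℝ) : Circ) = _
    rw [hcast]
    have he : ((⌊r' * q⌋ : ℝ) / q + (r' - (⌊r' * q⌋ : ℝ) / q)) = r' := by ring
    rw [he, eq_comm, ← sub_eq_zero]
    show ((r' - r : ℝ) : Circ) = 0
    rw [AddCircle.coe_eq_zero_iff]
    refine ⟨-⌊r⌋, ?_⟩
    rw [hr', Int.fract, zsmul_eq_mul]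
    push_cast
    ring

theorem stmt_4
    (s m q : ℕ) (hs : 1 ≤ s) (hm : 1 ≤ m) (hq : 2 ≤ q)
    (α : Fin s → ℝ) (hα : LinearIndependent ℚ (Fin.cons (1 : ℝ) α))
    (τs : Fin m → Equiv.Perm (Fin q))
    (E : Equiv.Perm (Fin q) → Equiv.Perm Circ)
    (hE : ∀ (τ : Equiv.Perm (Fin q)) (i : Fin q) (t : ℝ), 0 ≤ t → t < 1 / q →
      E τ ((((i : ℕ) : ℝ) / q + t : ℝ) : Circ) = ((((τ i : ℕ) : ℝ) / q + t : ℝ) : Circ))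
    (K : Subgroup (Equiv.Perm Circ)) (hK : K = Hgrp s m q α τs E ⊓ Delta q) :
    Subgroup.closure
      {f : Equiv.Perm Circ | ∃ a ∈ Agrp s α, ∃ g ∈ Qgrp m q τs E, f = Rot a * g * (Rot a)⁻¹} = K := by
  subst hK
  have hq1 : 1 ≤ q := le_trans one_le_two hq
  have hq0 : ((q : ℝ)) ≠ 0 := by positivity
  set S : Set (Equiv.Perm Circ) :=
    {f : Equiv.Perm Circ | ∃ a ∈ Agrp s α, ∃ g ∈ Qgrp m q τs E, f = Rot a * g * (Rot a)⁻¹} with hS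
  set N := Subgroup.closure S with hN
  -- each generator E (τs j) lies in Delta q
  have hEDelta : ∀ τ : Equiv.Perm (Fin q), E τ ∈ Delta q := by
    intro τ x
    obtain ⟨i, t, ht0, ht1, rfl⟩ := circ_decomp q hq1 x
    rw [hE τ i t ht0 ht1]
    show ((((τ i : ℕ) : ℝ) / q + t - (((i : ℕ) : ℝ) / q + t) : ℝ) : Circ) ∈ RatPts q
    refine ⟨((τ i : ℕ) : ℤ) - ((i : ℕ) : ℤ), ?_⟩
    show (((((τ i : ℕ) : ℤ) - ((i : ℕ) : ℤ)) • ((q:ℝ)⁻¹) : ℝ) : Circ) = _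
    congr 1
    rw [zsmul_eq_mul]
    push_cast
    field_simp
    ring
  -- Q ≤ Delta q
  have hQDelta : Qgrp m q τs E ≤ Delta q := by
    rw [Qgrp, Subgroup.closure_le]
    rintro f ⟨j, rfl⟩
    exact hEDelta (τs j)
  -- rotations by elements of Delta-conjugation preserve Delta
  have hconjDelta : ∀ (a : Circ) (g : Equiv.Perm Circ), g ∈ Delta q →
      Rot a * g * (Rot a)⁻¹ ∈ Delta q := by
    intro a g hg x
    have : (Rot a * g * (Rot a)⁻¹) x - x = g ((Rot a)⁻¹ x) - (Rot a)⁻¹ x := by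
      rw [rot_inv]
      simp only [Equiv.Perm.mul_apply, rot_apply]
      abel
    rw [this]
    exact hg _
  -- Rot a ∈ H for a ∈ A
  have hRotH : ∀ a ∈ Agrp s α, Rot a ∈ Hgrp s m q α τs E := by
    intro a ha
    induction ha using AddSubgroup.closure_induction with
    | mem x hx =>
      obtain ⟨i, rfl⟩ := hx
      exact Subgroup.subset_closure (Or.inl ⟨i, rfl⟩)
    | zero => rw [rot_zero]; exact one_mem _
    | add x y _ _ hx hy => rw [rot_add]; exact mul_mem hx hy
    | neg x _ hx => rw [← rot_inv]; exact inv_mem hx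
  -- Q ≤ H
  have hQH : Qgrp m q τs E ≤ Hgrp s m q α τs E := by
    rw [Qgrp, Subgroup.closure_le]
    rintro f ⟨j, rfl⟩
    exact Subgroup.subset_closure (Or.inr ⟨j, rfl⟩)
  -- N ≤ H ⊓ Delta
  have hNle : N ≤ Hgrp s m q α τs E ⊓ Delta q := by
    rw [hN, Subgroup.closure_le]
    rintro f ⟨a, ha, g, hg, rfl⟩
    have h1 : Rot a ∈ Hgrp s m q α τs E := hRotH a ha
    have h2 : g ∈ Hgrp s m q α τs E := hQH hg
    exact ⟨mul_mem (mul_mem h1 h2) ((Hgrp s m q α τs E).inv_mem h1),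
      hconjDelta a g (hQDelta hg)⟩
  -- N is stable under conjugation by Rot b, b ∈ A
  have hconjN : ∀ b ∈ Agrp s α, ∀ n ∈ N, Rot b * n * (Rot b)⁻¹ ∈ N := by
    intro b hb n hn
    induction hn using Subgroup.closure_induction with
    | mem x hx =>
      obtain ⟨a, ha, g, hg, rfl⟩ := hx
      have : Rot b * (Rot a * g * (Rot a)⁻¹) * (Rot b)⁻¹
          = Rot (a + b) * g * (Rot (a + b))⁻¹ := by
        rw [show Rot (a + b) = Rot b * Rot a by rw [← rot_add, add_comm], mul_inv_rev]
        group
      rw [this]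
      exact Subgroup.subset_closure ⟨a + b, add_mem ha hb, g, hg, rfl⟩
    | one => simpa using one_mem N
    | mul x y _ _ hx hy =>
      have : Rot b * (x * y) * (Rot b)⁻¹
          = (Rot b * x * (Rot b)⁻¹) * (Rot b * y * (Rot b)⁻¹) := by group
      rw [this]; exact mul_mem hx hy
    | inv x _ hx =>
      have : Rot b * x⁻¹ * (Rot b)⁻¹ = (Rot b * x * (Rot b)⁻¹)⁻¹ := by group
      rw [this]; exact inv_mem hx
  -- every element of H factors as Rot a * n with a ∈ A, n ∈ N
  have hfact : ∀ f ∈ Hgrp s m q α τs E, ∃ a ∈ Agrp s α, ∃ n ∈ N, f = Rot a * n := by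
    intro f hf
    induction hf using Subgroup.closure_induction with
    | mem x hx =>
      rcases hx with ⟨i, rfl⟩ | ⟨j, rfl⟩
      · exact ⟨_, AddSubgroup.subset_closure ⟨i, rfl⟩, 1, one_mem N, (mul_one _).symm⟩
      · refine ⟨0, zero_mem _, E (τs j), ?_, by rw [rot_zero, one_mul]⟩
        have heq : E (τs j) = Rot 0 * E (τs j) * (Rot 0)⁻¹ := by
          rw [rot_zero]; group
        rw [heq]
        exact Subgroup.subset_closure ⟨0, zero_mem _, E (τs j),
          Subgroup.subset_closure ⟨j, rfl⟩, rfl⟩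
    | one => exact ⟨0, zero_mem _, 1, one_mem N, by rw [rot_zero, one_mul]⟩
    | mul x y _ _ hx hy =>
      obtain ⟨a, ha, n, hn, rfl⟩ := hx
      obtain ⟨b, hb, p, hp, rfl⟩ := hy
      refine ⟨a + b, add_mem ha hb, (Rot b)⁻¹ * n * Rot b * p, ?_, ?_⟩
      · have h1 : (Rot b)⁻¹ * n * Rot b ∈ N := by
          have := hconjN (-b) (neg_mem hb) n hn
          rwa [← rot_inv, inv_inv] at this
        exact mul_mem h1 hp
      · rw [rot_add]; group
    | inv x _ hx =>
      obtain ⟨a, ha, n, hn, rfl⟩ := hx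
      refine ⟨-a, neg_mem ha, Rot a * n⁻¹ * (Rot a)⁻¹, ?_, ?_⟩
      · exact hconjN a ha n⁻¹ (inv_mem hn)
      · rw [show Rot (-a) = (Rot a)⁻¹ from (rot_inv a).symm]; group
  -- A ∩ RatPts = 0
  have hAR : ∀ c ∈ Agrp s α, c ∈ RatPts q → c = 0 := by
    intro c hc hcr
    -- c is an integer combination of the α i
    have hcomb : ∀ c ∈ Agrp s α, ∃ n : Fin s → ℤ,
        c = (((Finset.univ.sum fun i => (n i : ℝ) * α i) : ℝ) : Circ) := by
      intro c hc
      induction hc using AddSubgroup.closure_induction with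
      | mem x hx =>
        obtain ⟨i, rfl⟩ := hx
        refine ⟨Pi.single i 1, ?_⟩
        congr 1
        rw [Finset.sum_eq_single i]
        · simp
        · intro b _ hb; simp [Pi.single_apply, hb]
        · simp
      | zero => exact ⟨0, by simp⟩
      | add x y _ _ hx hy =>
        obtain ⟨n1, rfl⟩ := hx
        obtain ⟨n2, rfl⟩ := hy
        refine ⟨n1 + n2, ?_⟩
        have hsum : (Finset.univ.sum fun i : Fin s => ((n1 + n2) i : ℝ) * α i)
            = (Finset.univ.sum fun i : Fin s => (n1 i : ℝ) * α i)
              + (Finset.univ.sum fun i : Fin s => (n2 i : ℝ) * α i) := by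
          rw [← Finset.sum_add_distrib]
          apply Finset.sum_congr rfl
          intro i _
          simp only [Pi.add_apply]
          push_cast
          ring
        rw [hsum]
        rfl
      | neg x _ hx =>
        obtain ⟨n1, rfl⟩ := hx
        refine ⟨-n1, ?_⟩
        have hsum : (Finset.univ.sum fun i : Fin s => ((-n1) i : ℝ) * α i)
            = -(Finset.univ.sum fun i : Fin s => (n1 i : ℝ) * α i) := by
          rw [← Finset.sum_neg_distrib]
          apply Finset.sum_congr rfl
          intro i _
          simp only [Pi.neg_apply]
          push_cast
          ring
        rw [hsum]
        rfl
    obtain ⟨n, rfl⟩ := hcomb c hc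
    obtain ⟨k, hk⟩ := hcr
    -- hk : k • (q⁻¹ : Circ) = coe (Σ n i α i)
    have hk' : (((k : ℝ) * (q : ℝ)⁻¹ : ℝ) : Circ)
        = (((Finset.univ.sum fun i => (n i : ℝ) * α i) : ℝ) : Circ) := by
      rw [← hk, show ((k : ℝ) * (q : ℝ)⁻¹) = k • ((q : ℝ)⁻¹) from (zsmul_eq_mul _ _).symm]
      rfl
    rw [eq_comm, ← sub_eq_zero] at hk'
    have hk2 : (((Finset.univ.sum fun i => (n i : ℝ) * α i) - (k : ℝ) * (q : ℝ)⁻¹ : ℝ) : Circ) = 0 := hk'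
    rw [AddCircle.coe_eq_zero_iff] at hk2
    obtain ⟨z, hz⟩ := hk2
    -- linear relation over ℚ
    set g : Fin (s + 1) → ℚ :=
      (Fin.cons (-((k : ℚ) / q + z)) (fun i => (n i : ℚ)) : Fin (s + 1) → ℚ) with hg
    have hrel : (Finset.univ.sum fun j : Fin (s + 1) =>
        g j • (Fin.cons (1 : ℝ) α : Fin (s + 1) → ℝ) j) = 0 := by
      rw [Fin.sum_univ_succ]
      simp only [hg, Fin.cons_zero, Fin.cons_succ, Rat.smul_def]
      have hz' : (Finset.univ.sum fun i => (n i : ℝ) * α i) = (k : ℝ) * (q : ℝ)⁻¹ + z := by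
        rw [zsmul_eq_mul, mul_one] at hz
        linarith [hz]
      push_cast
      rw [hz']
      ring
    have hall := Fintype.linearIndependent_iff.1 hα g hrel
    have hn0 : ∀ i, n i = 0 := by
      intro i
      have := hall i.succ
      rw [hg] at this
      simp only [Fin.cons_succ] at this
      exact_mod_cast this
    simp [hn0]
  -- antisymmetry
  apply le_antisymm hNle
  rintro f ⟨hfH, hfD⟩
  obtain ⟨a, ha, n, hn, rfl⟩ := hfact f hfH
  have hnD : n ∈ Delta q := (hNle hn).2
  have hRotD : Rot a ∈ Delta q := by
    have : Rot a = (Rot a * n) * n⁻¹ := by group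
    rw [this]
    exact mul_mem hfD (inv_mem hnD)
  have haR : a ∈ RatPts q := by
    have := hRotD 0
    simpa [rot_apply] using this
  rw [hAR a ha haR, rot_zero, one_mul]
  exact hn
end
end

section
/- For every x ∈ [0,1/q) and every f ∈ K there exists a unique permutation ω of {1,…,q} such that f(x + (i−1)/q) = x + (ω(i)−1)/q in ℝ/ℤ for all i ∈ {1,…,q}; writing ω_x(f) for this permutation, the map f ↦ ω_x(f) is a group homomorphism from K to the symmetric group S_q, and ω_x(E_τ) = τ for every τ ∈ 𝔖(Q). -/
open Equiv

noncomputable section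

lemma circ_pt_inj {q : ℕ} (hq : 0 < q) {x : ℝ} {a b : ℕ} (ha : a < q) (hb : b < q)
    (h : ((x + (a : ℝ) / q : ℝ) : Circ) = ((x + (b : ℝ) / q : ℝ) : Circ)) : a = b := by
  haveI : Fact ((0:ℝ) < 1) := ⟨one_pos⟩
  have hqp : (0:ℝ) < q := by exact_mod_cast hq
  have hmem : ∀ c : ℕ, c < q → x + (c : ℝ) / q ∈ Set.Ico x (x + 1) := by
    intro c hc
    have h1 : (0:ℝ) ≤ (c : ℝ) / q := div_nonneg (by positivity) hqp.le
    have h2 : (c : ℝ) / q < 1 := (div_lt_one hqp).2 (by exact_mod_cast hc)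
    exact ⟨by linarith, by linarith⟩
  have := (AddCircle.coe_eq_coe_iff_of_mem_Ico (hmem a ha) (hmem b hb)).1 h
  field_simp at this
  exact_mod_cast (add_left_cancel this)

lemma exists_target {q : ℕ} (hq : 0 < q) {f : Equiv.Perm Circ}
    (hf : f ∈ Delta q) (x : ℝ) (c : ℕ) (hc : c < q) :
    ∃ d : ℕ, d < q ∧ f ((x + (c : ℝ) / q : ℝ) : Circ) = ((x + (d : ℝ) / q : ℝ) : Circ) := by
  have hqr : (q : ℝ) ≠ 0 := by positivity
  obtain ⟨p, hp⟩ := AddSubgroup.mem_zmultiples_iff.1 (hf ((x + (c : ℝ) / q : ℝ) : Circ))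
  have hfy : f ((x + (c : ℝ) / q : ℝ) : Circ) = ((x + (c : ℝ) / q + (p : ℝ) / q : ℝ) : Circ) := by
    have h1 : f ((x + (c : ℝ) / q : ℝ) : Circ)
        = ((x + (c : ℝ) / q : ℝ) : Circ) + p • (((q : ℝ)⁻¹ : ℝ) : Circ) := by
      rw [hp]; abel
    rw [h1]
    have h2 : p • (((q : ℝ)⁻¹ : ℝ) : Circ) = (((p : ℝ) / q : ℝ) : Circ) := by
      rw [← AddCircle.coe_zsmul]
      norm_num [zsmul_eq_mul, div_eq_mul_inv]
    rw [h2, ← AddCircle.coe_add]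
  refine ⟨(((c : ℤ) + p) % q).toNat, ?_, ?_⟩
  · have h1 : ((c : ℤ) + p) % q < q := Int.emod_lt_of_pos _ (by exact_mod_cast hq)
    omega
  · rw [hfy]
    set d : ℕ := (((c : ℤ) + p) % q).toNat with hd
    have hdz : (d : ℤ) = ((c : ℤ) + p) % q := by
      have := Int.emod_nonneg ((c : ℤ) + p) (by exact_mod_cast hq.ne' : (q : ℤ) ≠ 0)
      omega
    have hkey : (c : ℤ) + p - d = q * (((c : ℤ) + p) / q) := by
      rw [hdz]; have := Int.emod_add_mul_ediv ((c : ℤ) + p) q; linarith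
    apply (QuotientAddGroup.eq_iff_sub_mem).2
    refine ⟨((c : ℤ) + p) / q, ?_⟩
    have : ((((c : ℤ) + p - d : ℤ) : ℝ)) = ((((c : ℤ) + p) / q : ℤ) : ℝ) * q := by
      rw [hkey]; push_cast; ring
    push_cast at this
    simp only [zsmul_eq_mul, mul_one]
    field_simp
    linarith

theorem stmt_6
    (s m q : ℕ) (hs : 1 ≤ s) (hm : 1 ≤ m) (hq : 2 ≤ q)
    (α : Fin s → ℝ) (hα : LinearIndependent ℚ (Fin.cons (1 : ℝ) α))
    (τs : Fin m → Equiv.Perm (Fin q))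
    (E : Equiv.Perm (Fin q) → Equiv.Perm Circ)
    (hE : ∀ (τ : Equiv.Perm (Fin q)) (i : Fin q) (t : ℝ), 0 ≤ t → t < 1 / q →
      E τ ((((i : ℕ) : ℝ) / q + t : ℝ) : Circ) = ((((τ i : ℕ) : ℝ) / q + t : ℝ) : Circ))
    (K : Subgroup (Equiv.Perm Circ)) (hK : K = Hgrp s m q α τs E ⊓ Delta q)
    (x : ℝ) (hx0 : 0 ≤ x) (hxq : x < 1 / q) :
    (∀ f : Equiv.Perm Circ, f ∈ K →
      ∃! ω : Equiv.Perm (Fin q), ∀ i : Fin q,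
        f ((x + ((i : ℕ) : ℝ) / q : ℝ) : Circ) = ((x + ((ω i : ℕ) : ℝ) / q : ℝ) : Circ)) ∧
    (∀ ωx : ↥K → Equiv.Perm (Fin q),
      (∀ (f : ↥K) (i : Fin q),
        (f : Equiv.Perm Circ) ((x + ((i : ℕ) : ℝ) / q : ℝ) : Circ)
          = ((x + ((ωx f i : ℕ) : ℝ) / q : ℝ) : Circ)) →
      (∀ f g : ↥K, ωx (f * g) = ωx f * ωx g) ∧
      (∀ τ ∈ SQgrp m q τs, ∀ (hmem : E τ ∈ K), ωx ⟨E τ, hmem⟩ = τ)) := by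
  have hq0 : 0 < q := by omega
  have keyInj : ∀ a b : Fin q,
      ((x + ((a : ℕ) : ℝ) / q : ℝ) : Circ) = ((x + ((b : ℕ) : ℝ) / q : ℝ) : Circ) → a = b := by
    intro a b h
    exact Fin.ext (circ_pt_inj hq0 a.isLt b.isLt h)
  constructor
  · intro f hf
    rw [hK] at hf
    have hfD : f ∈ Delta q := hf.2
    choose d hd hfd using fun i : Fin q => exists_target hq0 hfD x (i : ℕ) i.isLt
    set g : Fin q → Fin q := fun i => ⟨d i, hd i⟩ with hg
    have hginj : Function.Injective g := by
      intro a b hab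
      apply keyInj
      apply f.injective
      rw [hfd a, hfd b]
      have : d a = d b := congrArg Fin.val hab
      rw [this]
    refine ⟨Equiv.ofBijective g (Finite.injective_iff_bijective.mp hginj), fun i => hfd i, ?_⟩
    intro ω' hω'
    ext i
    exact congrArg Fin.val (keyInj _ _ ((hω' i).symm.trans (hfd i)))
  · intro ωx h
    constructor
    · intro f g
      ext i
      refine congrArg Fin.val (keyInj _ _ (Eq.trans ?_ (h f (ωx g i))))
      rw [← h (f * g) i]
      have : ((f * g : ↥K) : Equiv.Perm Circ) = (f : Equiv.Perm Circ) * g := rfl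
      rw [this, Equiv.Perm.mul_apply, h g i]
    · intro τ hτ hmem
      ext i
      refine congrArg Fin.val (keyInj _ _ ?_)
      rw [← h ⟨E τ, hmem⟩ i]
      have h1 := hE τ i x hx0 hxq
      simp only [add_comm] at h1 ⊢
      exact h1
end
end

section
/- Assume q ≥ 5 and that K is infinite. If for every x ∈ [0,1/q) the image ω_x(K) contains the alternating group A_q, then K has no solvable subgroup of finite index (K is not virtually solvable). -/
open Equiv

noncomputable section

lemma circ_intCast' (n : ℤ) : (((n : ℝ) : Circ)) = 0 := by
  rw [AddCircle.coe_eq_zero_iff]; exact ⟨n, by simp⟩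

/-- An element of `Perm (Fin q)`, `q ≥ 5`, commuting with all of its conjugates by
even permutations, is the identity. -/
lemma conj_comm_eq_one {q : ℕ} (hq5 : 5 ≤ q) (g : Equiv.Perm (Fin q))
    (hg : ∀ σ : Equiv.Perm (Fin q), σ ∈ alternatingGroup (Fin q) →
      g * (σ * g * σ⁻¹) = (σ * g * σ⁻¹) * g) : g = 1 := by
  by_contra hg1
  have hex : ∃ a, g a ≠ a := by
    by_contra h
    push_neg at h
    exact hg1 (Equiv.ext fun a => h a)
  obtain ⟨a, ha⟩ := hex
  have hba : g a ≠ a := ha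
  have hcard : 0 < (({a, g a, g⁻¹ a} : Finset (Fin q))ᶜ).card := by
    have h3 : ({a, g a, g⁻¹ a} : Finset (Fin q)).card ≤ 3 := by
      refine le_trans (Finset.card_insert_le _ _) ?_
      refine Nat.succ_le_succ ?_
      refine le_trans (Finset.card_insert_le _ _) ?_
      simp
    rw [Finset.card_compl, Fintype.card_fin]
    omega
  obtain ⟨c, hc⟩ := Finset.card_pos.mp hcard
  simp only [Finset.mem_compl, Finset.mem_insert, Finset.mem_singleton, not_or] at hc
  obtain ⟨hca, hcb, hcg⟩ := hc
  have hda : g c ≠ a := by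
    intro h
    exact hcg (by rw [← h]; exact (g.symm_apply_apply c).symm)
  have hdb : g c ≠ g a := fun h => hca (g.injective h)
  have key : ∀ e₁ e₂ : Fin q, e₁ ≠ e₂ → e₁ ≠ a → e₁ ≠ g a → e₁ ≠ c →
      e₂ ≠ a → e₂ ≠ g a → e₂ ≠ c →
      (Equiv.swap (g a) c * Equiv.swap e₁ e₂) (g c) = g c := by
    intro e₁ e₂ h12 h1a h1b h1c h2a h2b h2c
    set σ := Equiv.swap (g a) c * Equiv.swap e₁ e₂ with hσ
    have hbc : g a ≠ c := Ne.symm hcb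
    have hσA : σ ∈ alternatingGroup (Fin q) := by
      rw [Equiv.Perm.mem_alternatingGroup, hσ, map_mul, Equiv.Perm.sign_swap hbc,
        Equiv.Perm.sign_swap h12]
      norm_num
    have hσa : σ a = a := by
      rw [hσ, Equiv.Perm.mul_apply, Equiv.swap_apply_of_ne_of_ne (Ne.symm h1a) (Ne.symm h2a),
        Equiv.swap_apply_of_ne_of_ne (Ne.symm hba) (Ne.symm hca)]
    have hσb : σ (g a) = c := by
      rw [hσ, Equiv.Perm.mul_apply, Equiv.swap_apply_of_ne_of_ne (Ne.symm h1b) (Ne.symm h2b),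
        Equiv.swap_apply_left]
    have hσc : σ c = g a := by
      rw [hσ, Equiv.Perm.mul_apply, Equiv.swap_apply_of_ne_of_ne (Ne.symm h1c) (Ne.symm h2c),
        Equiv.swap_apply_right]
    have hinva : σ⁻¹ a = a := Equiv.Perm.inv_eq_iff_eq.mpr hσa.symm
    have hinvb : σ⁻¹ (g a) = c := Equiv.Perm.inv_eq_iff_eq.mpr hσc.symm
    have heq := congrArg (fun π : Equiv.Perm (Fin q) => π a) (hg σ hσA)
    simp only [Equiv.Perm.mul_apply] at heq
    rw [hinva, hσb, hinvb] at heq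
    exact heq.symm
  by_cases hdcc : g c = c
  · have h2 : 1 < (({a, g a, c} : Finset (Fin q))ᶜ).card := by
      have h3 : ({a, g a, c} : Finset (Fin q)).card ≤ 3 := by
        refine le_trans (Finset.card_insert_le _ _) ?_
        refine Nat.succ_le_succ ?_
        refine le_trans (Finset.card_insert_le _ _) ?_
        simp
      rw [Finset.card_compl, Fintype.card_fin]
      omega
    obtain ⟨e₁, he₁, e₂, he₂, h12⟩ := Finset.one_lt_card.mp h2
    simp only [Finset.mem_compl, Finset.mem_insert, Finset.mem_singleton, not_or] at he₁ he₂
    have hkey := key e₁ e₂ h12 he₁.1 he₁.2.1 he₁.2.2 he₂.1 he₂.2.1 he₂.2.2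
    rw [hdcc, Equiv.Perm.mul_apply,
      Equiv.swap_apply_of_ne_of_ne (fun h => he₁.2.2 h.symm) (fun h => he₂.2.2 h.symm),
      Equiv.swap_apply_right] at hkey
    exact hcb hkey.symm
  · have h1 : 0 < (({a, g a, c, g c} : Finset (Fin q))ᶜ).card := by
      have h4 : ({a, g a, c, g c} : Finset (Fin q)).card ≤ 4 := by
        refine le_trans (Finset.card_insert_le _ _) ?_
        refine Nat.succ_le_succ ?_
        refine le_trans (Finset.card_insert_le _ _) ?_
        refine Nat.succ_le_succ ?_
        refine le_trans (Finset.card_insert_le _ _) ?_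
        simp
      rw [Finset.card_compl, Fintype.card_fin]
      omega
    obtain ⟨e, he⟩ := Finset.card_pos.mp h1
    simp only [Finset.mem_compl, Finset.mem_insert, Finset.mem_singleton, not_or] at he
    have hkey := key (g c) e (fun h => he.2.2.2 h.symm) hda hdb hdcc he.1 he.2.1 he.2.2.1
    rw [Equiv.Perm.mul_apply, Equiv.swap_apply_left,
      Equiv.swap_apply_of_ne_of_ne he.2.1 he.2.2.1] at hkey
    exact he.2.2.2 hkey

/-- The map `i ↦ x + i/q` from `Fin q` to the circle is injective when `0 ≤ x < 1/q`. -/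
lemma upt_inj {q : ℕ} (hq : 1 ≤ q) {x : ℝ} (hx0 : 0 ≤ x) (hx1 : x < 1 / (q : ℝ)) :
    Function.Injective (fun i : Fin q => ((x + ((i : ℕ) : ℝ) / q : ℝ) : Circ)) := by
  haveI : Fact ((0 : ℝ) < 1) := ⟨zero_lt_one⟩
  have hq0 : (0 : ℝ) < q := Nat.cast_pos.mpr hq
  intro i j h
  have mem : ∀ k : Fin q, (x + ((k : ℕ) : ℝ) / q : ℝ) ∈ Set.Ico (0 : ℝ) (0 + 1) := by
    intro k
    constructor
    · have h0 : (0:ℝ) ≤ ((k : ℕ) : ℝ) / q := by positivity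
      linarith
    · rw [zero_add]
      have hk : ((k : ℕ) : ℝ) + 1 ≤ q := by exact_mod_cast k.2
      have h3 : (1 + ((k : ℕ) : ℝ)) / q ≤ (q : ℝ) / q := by
        apply (div_le_div_iff_of_pos_right hq0).mpr
        linarith
      rw [div_self hq0.ne'] at h3
      have h2 : (1 / (q:ℝ) + ((k : ℕ) : ℝ) / q) = (1 + ((k : ℕ) : ℝ)) / q := by ring
      have h4 : ((k : ℕ) : ℝ) / q ≤ ((k : ℕ) : ℝ) / q := le_refl _
      calc x + ((k : ℕ) : ℝ) / q < 1 / q + ((k : ℕ) : ℝ) / q := by linarith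
        _ = (1 + ((k : ℕ) : ℝ)) / q := h2
        _ ≤ 1 := h3
  have heq := (AddCircle.coe_eq_coe_iff_of_mem_Ico (mem i) (mem j)).mp h
  have h9 : ((i : ℕ) : ℝ) / q = ((j : ℕ) : ℝ) / q := by linarith
  have h10 := mul_right_cancel₀ hq0.ne' ((div_eq_div_iff hq0.ne' hq0.ne').mp h9)
  exact Fin.ext (by exact_mod_cast h10)

/-- Any permutation in `Delta q` maps the point `x + i/q` to a point `x + j/q`. -/
lemma delta_exists_image {q : ℕ} (hq : 1 ≤ q) (x : ℝ) (f : Equiv.Perm Circ)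
    (hf : ∀ u : Circ, f u - u ∈ RatPts q) (i : Fin q) :
    ∃ j : Fin q, f ((x + ((i : ℕ) : ℝ) / q : ℝ) : Circ) = ((x + ((j : ℕ) : ℝ) / q : ℝ) : Circ) := by
  have hq0 : (0 : ℝ) < q := Nat.cast_pos.mpr hq
  have hqZ : (0 : ℤ) < (q : ℤ) := by exact_mod_cast hq
  obtain ⟨n, hn⟩ := AddSubgroup.mem_zmultiples_iff.mp (hf ((x + ((i : ℕ) : ℝ) / q : ℝ) : Circ))
  set m : ℤ := (((i : ℕ) : ℤ) + n) % (q : ℤ) with hm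
  have hm0 : 0 ≤ m := Int.emod_nonneg _ hqZ.ne'
  have hmq : m < (q : ℤ) := Int.emod_lt_of_pos _ hqZ
  have hjq : m.toNat < q := by omega
  refine ⟨⟨m.toNat, hjq⟩, ?_⟩
  have hzs : (((n • ((q : ℝ)⁻¹) : ℝ)) : Circ) = n • ((((q : ℝ)⁻¹ : ℝ)) : Circ) :=
    (map_zsmul (QuotientAddGroup.mk' _) n ((q : ℝ)⁻¹)).symm
  have hfu : f ((x + ((i : ℕ) : ℝ) / q : ℝ) : Circ)
      = (((x + ((i : ℕ) : ℝ) / q) + (n • ((q : ℝ)⁻¹) : ℝ) : ℝ) : Circ) := by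
    have h1 := sub_eq_iff_eq_add'.mp hn.symm
    rw [h1, ← hzs]
    rfl
  rw [hfu]
  set t : ℤ := (((i : ℕ) : ℤ) + n) / (q : ℤ) with ht
  have hmt : ((i : ℕ) : ℤ) + n = (q : ℤ) * t + m := (Int.mul_ediv_add_emod _ _).symm
  have h2' : ((i : ℕ) : ℝ) + (n : ℝ) = (q : ℝ) * (t : ℝ) + (m : ℝ) := by exact_mod_cast hmt
  have hmr : ((m.toNat : ℕ) : ℝ) = (m : ℝ) := by exact_mod_cast Int.toNat_of_nonneg hm0
  have hreal : ((x + ((i : ℕ) : ℝ) / q) + (n • ((q : ℝ)⁻¹) : ℝ) : ℝ)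
      = (x + ((m.toNat : ℕ) : ℝ) / q) + ((t : ℤ) : ℝ) := by
    rw [zsmul_eq_mul, hmr]
    have hne : (q : ℝ) ≠ 0 := hq0.ne'
    field_simp
    linarith
  rw [hreal]
  show ((x + ((m.toNat : ℕ) : ℝ) / q : ℝ) : Circ) + (((t : ℤ) : ℝ) : Circ)
      = ((x + ((m.toNat : ℕ) : ℝ) / q : ℝ) : Circ)
  rw [circ_intCast', add_zero]


theorem stmt_10
    (s m q : ℕ) (hs : 1 ≤ s) (hm : 1 ≤ m) (hq : 2 ≤ q)
    (α : Fin s → ℝ) (hα : LinearIndependent ℚ (Fin.cons (1 : ℝ) α))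
    (τs : Fin m → Equiv.Perm (Fin q))
    (E : Equiv.Perm (Fin q) → Equiv.Perm Circ)
    (hE : ∀ (τ : Equiv.Perm (Fin q)) (i : Fin q) (t : ℝ), 0 ≤ t → t < 1 / q →
      E τ ((((i : ℕ) : ℝ) / q + t : ℝ) : Circ) = ((((τ i : ℕ) : ℝ) / q + t : ℝ) : Circ))
    (hq5 : 5 ≤ q)
    (K : Subgroup (Equiv.Perm Circ)) (hK : K = Hgrp s m q α τs E ⊓ Delta q)
    (hinf : Infinite ↥K)
    (hAq : ∀ (x : ℝ), 0 ≤ x → x < 1 / q → ∀ ωx : ↥K →* Equiv.Perm (Fin q),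
      (∀ (f : ↥K) (i : Fin q),
        (f : Equiv.Perm Circ) ((x + ((i : ℕ) : ℝ) / q : ℝ) : Circ)
          = ((x + ((ωx f i : ℕ) : ℝ) / q : ℝ) : Circ)) →
      alternatingGroup (Fin q) ≤ ωx.range) :
    ¬ ∃ S : Subgroup ↥K, S.FiniteIndex ∧ IsSolvable ↥S := by
  rintro ⟨S, hSfin, hSsolv⟩
  haveI := hSfin
  haveI : Group.IsSolvable ↥S := hSsolv
  classical
  haveI hTn : S.normalCore.Normal := Subgroup.normalCore_normal S
  haveI hTf : S.normalCore.FiniteIndex := Subgroup.finiteIndex_normalCore S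
  haveI hTsolv : Group.IsSolvable ↥S.normalCore :=
    solvable_of_solvable_injective (Subgroup.inclusion_injective S.normalCore_le)
  have hTbot : S.normalCore ≠ ⊥ := by
    intro h
    have h1 := hTf.index_ne_zero
    rw [h, Subgroup.index_bot, Nat.card_eq_zero_of_infinite] at h1
    exact h1 rfl
  -- The derived chain of the normal core, as subgroups of `K`.
  set P : ℕ → Subgroup ↥K :=
    fun n => (derivedSeries ↥S.normalCore n).map S.normalCore.subtype with hP
  have hP0 : P 0 = S.normalCore := by
    simp only [hP, derivedSeries_zero, ← MonoidHom.range_eq_map, Subgroup.range_subtype]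
  have hPsucc : ∀ n, P (n + 1) = ⁅P n, P n⁆ := by
    intro n
    simp only [hP, derivedSeries_succ, Subgroup.map_commutator]
  have hPnormal : ∀ n, (P n).Normal := by
    intro n
    induction n with
    | zero => rw [hP0]; infer_instance
    | succ n ih => rw [hPsucc]; exact @Subgroup.commutator_normal _ _ _ _ ih ih
  have hPex : ∃ n, P n = ⊥ := by
    obtain ⟨n, hn⟩ := hTsolv.solvable
    refine ⟨n, ?_⟩
    simp only [hP, hn, Subgroup.map_bot]
  obtain ⟨d, hBne, hBcomm⟩ : ∃ d, P d ≠ ⊥ ∧ ⁅P d, P d⁆ = ⊥ := by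
    have hspec := Nat.find_spec hPex
    rcases hn0 : Nat.find hPex with _ | d
    · rw [hn0, hP0] at hspec
      exact absurd hspec hTbot
    · rw [hn0] at hspec
      refine ⟨d, Nat.find_min hPex (by rw [hn0]; exact Nat.lt_succ_self d), ?_⟩
      rw [← hPsucc]
      exact hspec
  set B := P d with hBdef
  haveI hBnormal : B.Normal := hPnormal d
  obtain ⟨g₀, hg₀B, hg₀ne⟩ : ∃ g₀ : ↥K, g₀ ∈ B ∧ g₀ ≠ 1 := by
    by_contra h
    push_neg at h
    exact hBne (Subgroup.eq_bot_iff_forall B |>.mpr h)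
  have hg₀ne' : (g₀ : Equiv.Perm Circ) ≠ 1 := fun h => hg₀ne (Subtype.ext h)
  obtain ⟨y, hy⟩ : ∃ y : Circ, (g₀ : Equiv.Perm Circ) y ≠ y := by
    by_contra h
    push_neg at h
    exact hg₀ne' (Equiv.ext fun y => h y)
  obtain ⟨r, hr⟩ : ∃ r : ℝ, ((r : ℝ) : Circ) = y :=
    QuotientAddGroup.mk'_surjective _ y
  -- Choose a representative `x + i0/q` of `y` with `x ∈ [0, 1/q)` and `i0 < q`.
  have hq1 : 1 ≤ q := by omega
  have hq0R : (0 : ℝ) < q := Nat.cast_pos.mpr hq1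
  set r' : ℝ := Int.fract r with hr'def
  have hr'0 : 0 ≤ r' := Int.fract_nonneg r
  have hr'1 : r' < 1 := Int.fract_lt_one r
  have hfl0 : 0 ≤ ⌊r' * q⌋ := Int.floor_nonneg.mpr (mul_nonneg hr'0 hq0R.le)
  have hflq : ⌊r' * q⌋ < (q : ℤ) := by
    apply Int.floor_lt.mpr
    push_cast
    nlinarith
  set i0n : ℕ := ⌊r' * q⌋.toNat with hi0ndef
  have hi0cast : ((i0n : ℕ) : ℝ) = ((⌊r' * q⌋ : ℤ) : ℝ) := by
    exact_mod_cast congrArg Int.cast (Int.toNat_of_nonneg hfl0)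
  have hi0q : i0n < q := by omega
  set x : ℝ := r' - i0n / q with hxdef
  have hle : ((i0n : ℕ) : ℝ) ≤ r' * q := by rw [hi0cast]; exact Int.floor_le _
  have hlt : r' * q < ((i0n : ℕ) : ℝ) + 1 := by rw [hi0cast]; exact Int.lt_floor_add_one _
  have hx0 : 0 ≤ x := by
    rw [hxdef, sub_nonneg, div_le_iff₀ hq0R]
    linarith
  have hx1 : x < 1 / (q : ℝ) := by
    rw [hxdef, sub_lt_iff_lt_add, ← add_div, lt_div_iff₀ hq0R]
    linarith
  set i0 : Fin q := ⟨i0n, hi0q⟩ with hi0def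
  have hu_y : ((x + ((i0 : ℕ) : ℝ) / q : ℝ) : Circ) = y := by
    have h3 : (x + ((i0 : ℕ) : ℝ) / q : ℝ) = r' := by
      show (x + ((i0n : ℕ) : ℝ) / q : ℝ) = r'
      rw [hxdef]; ring
    rw [h3]
    have h4 : r' = r + ((-⌊r⌋ : ℤ) : ℝ) := by
      rw [hr'def, Int.fract]
      push_cast
      ring
    rw [h4]
    show ((r : ℝ) : Circ) + (((-⌊r⌋ : ℤ) : ℝ) : Circ) = y
    rw [circ_intCast', add_zero, hr]
  -- Every element of `K` permutes the points `x + i/q`.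
  have hKle : K ≤ Delta q := by rw [hK]; exact inf_le_right
  have hKD : ∀ g : ↥K, ∀ u : Circ, (g : Equiv.Perm Circ) u - u ∈ RatPts q := by
    intro g u
    have hg : (g : Equiv.Perm Circ) ∈ Delta q := hKle g.2
    exact hg u
  choose φ hφ using fun (g : ↥K) (i : Fin q) =>
    delta_exists_image hq1 x (g : Equiv.Perm Circ) (hKD g) i
  have hinj : ∀ g : ↥K, Function.Injective (φ g) := by
    intro g i j hij
    apply upt_inj hq1 hx0 hx1
    show ((x + ((i : ℕ) : ℝ) / q : ℝ) : Circ) = ((x + ((j : ℕ) : ℝ) / q : ℝ) : Circ)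
    apply (g : Equiv.Perm Circ).injective
    rw [hφ g i, hφ g j, hij]
  have hbij : ∀ g : ↥K, Function.Bijective (φ g) :=
    fun g => Finite.injective_iff_bijective.mp (hinj g)
  set ω : ↥K →* Equiv.Perm (Fin q) :=
    { toFun := fun g => Equiv.ofBijective (φ g) (hbij g)
      map_one' := by
        refine Equiv.ext fun i => ?_
        apply upt_inj hq1 hx0 hx1
        show ((x + ((φ 1 i : ℕ) : ℝ) / q : ℝ) : Circ) = ((x + ((i : ℕ) : ℝ) / q : ℝ) : Circ)
        rw [← hφ 1 i]
        simp
      map_mul' := by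
        intro g h
        refine Equiv.ext fun i => ?_
        apply upt_inj hq1 hx0 hx1
        show ((x + ((φ (g * h) i : ℕ) : ℝ) / q : ℝ) : Circ)
            = ((x + ((φ g (φ h i) : ℕ) : ℝ) / q : ℝ) : Circ)
        rw [← hφ, ← hφ, ← hφ]
        simp [Equiv.Perm.mul_apply] } with hωdef
  have hAle : alternatingGroup (Fin q) ≤ ω.range := hAq x hx0 hx1 ω (fun g i => hφ g i)
  set M : Subgroup (Equiv.Perm (Fin q)) := B.map ω with hM
  have hpM : ω g₀ ∈ M := ⟨g₀, hg₀B, rfl⟩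
  have hp1 : ω g₀ ≠ 1 := by
    intro h
    apply hy
    have h5 : φ g₀ i0 = i0 := by
      have h6 := congrArg (fun π : Equiv.Perm (Fin q) => π i0) h
      exact h6
    have h6 := hφ g₀ i0
    rw [h5] at h6
    rw [← hu_y]
    exact h6
  have hMconj : ∀ σ ∈ alternatingGroup (Fin q), ∀ p ∈ M, σ * p * σ⁻¹ ∈ M := by
    intro σ hσ p hpm
    obtain ⟨k, hk⟩ := hAle hσ
    obtain ⟨b, hbB, hbp⟩ := hpm
    refine ⟨k * b * k⁻¹, hBnormal.conj_mem b hbB k, ?_⟩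
    rw [map_mul, map_mul, map_inv, hk, hbp]
  have hMcomm : ∀ p₁ ∈ M, ∀ p₂ ∈ M, p₁ * p₂ = p₂ * p₁ := by
    intro p₁ h₁ p₂ h₂
    obtain ⟨b₁, hb₁, rfl⟩ := h₁
    obtain ⟨b₂, hb₂, rfl⟩ := h₂
    have hcomm : b₁ * b₂ = b₂ * b₁ := by
      have h7 := Subgroup.commutator_mem_commutator hb₁ hb₂
      rw [hBcomm, Subgroup.mem_bot] at h7
      exact commutatorElement_eq_one_iff_mul_comm.mp h7
    rw [← map_mul, ← map_mul, hcomm]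
  exact hp1 (conj_comm_eq_one hq5 (ω g₀)
    (fun σ hσ => hMcomm _ hpM _ (hMconj σ hσ _ hpM)))
end
end
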